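/- arXiv:1308.0715 — 2 statements merged into one kernel-verified Lean document; each statement's English description precedes it below -/
import Mathlib

section
/- Let V be a finite-dimensional vector space over a field E of characteristic 0, W a finite increasing filtration on V, and N : V → V a nilpotent E-linear map with N(W_w) ⊆ W_w for all w. If W' and W'' are both relative monodromy filtrations of N with respect to W (i.e., each satisfies: (i) N(W'_w) ⊆ W'_{w-2} for all w, and (ii) for all w ∈ ℤ and m ≥ 0, the induced map N^m : gr^{W'}_{w+m} gr^W_w → gr^{W'}_{w-m} gr^W_w is an isomorphism), then W' = W''. -/
open Submodule

/-- `W` is a finite increasing filtration on `V`. -/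
def IsFiniteIncFiltration {E V : Type*} [Field E] [AddCommGroup V] [Module E V]
    (W : ℤ → Submodule E V) : Prop :=
  Monotone W ∧ (∃ a : ℤ, ∀ w ≤ a, W w = ⊥) ∧ (∃ b : ℤ, ∀ w : ℤ, b ≤ w → W w = ⊤)

/-- `W'` is the relative monodromy filtration of `N` with respect to `W`:
`W'` is a finite increasing filtration, `N (W'_w) ⊆ W'_{w-2}`, and for all `w` and `m ≥ 0`
the map induced by `N^m` from `gr^{W'}_{w+m} gr^W_w` to `gr^{W'}_{w-m} gr^W_w` is an
isomorphism (expressed at the level of subspaces of `V`: the `k`-th piece of the filtration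
induced by `W'` on `gr^W_w` is the image of `(W' k ⊓ W w) ⊔ W (w-1)`). -/
def IsRelMonodromy {E V : Type*} [Field E] [AddCommGroup V] [Module E V]
    (N : V →ₗ[E] V) (W W' : ℤ → Submodule E V) : Prop :=
  IsFiniteIncFiltration W' ∧
  (∀ w : ℤ, (W' w).map N ≤ W' (w - 2)) ∧
  (∀ (w : ℤ) (m : ℕ),
    -- injectivity of the induced map `N^m : gr^{W'}_{w+m} gr^W_w → gr^{W'}_{w-m} gr^W_w`
    (∀ x ∈ W' (w + (m : ℤ)) ⊓ W w,
        (N ^ m) x ∈ (W' (w - (m : ℤ) - 1) ⊓ W w) ⊔ W (w - 1) →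
        x ∈ (W' (w + (m : ℤ) - 1) ⊓ W w) ⊔ W (w - 1)) ∧
    -- surjectivity of the induced map
    (∀ y ∈ W' (w - (m : ℤ)) ⊓ W w, ∃ x ∈ W' (w + (m : ℤ)) ⊓ W w,
        y - (N ^ m) x ∈ (W' (w - (m : ℤ) - 1) ⊓ W w) ⊔ W (w - 1)))

namespace RelMonAux
variable {E V : Type*} [Field E] [AddCommGroup V] [Module E V]

def InjAx (N : V →ₗ[E] V) (W M : ℤ → Submodule E V) : Prop :=
  ∀ (w : ℤ) (m : ℕ), ∀ x ∈ M (w + (m : ℤ)) ⊓ W w,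
    (N ^ m) x ∈ (M (w - (m : ℤ) - 1) ⊓ W w) ⊔ W (w - 1) →
    x ∈ (M (w + (m : ℤ) - 1) ⊓ W w) ⊔ W (w - 1)

def SurjAx (N : V →ₗ[E] V) (W M : ℤ → Submodule E V) : Prop :=
  ∀ (w : ℤ) (m : ℕ), ∀ y ∈ M (w - (m : ℤ)) ⊓ W w, ∃ x ∈ M (w + (m : ℤ)) ⊓ W w,
    y - (N ^ m) x ∈ (M (w - (m : ℤ) - 1) ⊓ W w) ⊔ W (w - 1)

lemma aux_pow_M {N : V →ₗ[E] V} {M : ℤ → Submodule E V}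
    (hMN : ∀ w : ℤ, (M w).map N ≤ M (w - 2)) (m : ℕ) {k : ℤ} {x : V}
    (hx : x ∈ M k) : (N ^ m) x ∈ M (k - 2 * m) := by
  induction m with
  | zero => simpa using hx
  | succ m ih =>
    have h1 : N ((N ^ m) x) ∈ M (k - 2 * m - 2) := hMN _ ⟨_, ih, rfl⟩
    have h2 : (k - 2 * ((m + 1 : ℕ) : ℤ)) = k - 2 * m - 2 := by push_cast; ring
    rw [pow_succ', Module.End.mul_apply, h2]
    exact h1

lemma aux_pow_W {N : V →ₗ[E] V} {W : ℤ → Submodule E V}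
    (hNW : ∀ w : ℤ, (W w).map N ≤ W w) (m : ℕ) {w : ℤ} {x : V}
    (hx : x ∈ W w) : (N ^ m) x ∈ W w := by
  induction m with
  | zero => simpa using hx
  | succ m ih =>
    rw [pow_succ', Module.End.mul_apply]
    exact hNW _ ⟨_, ih, rfl⟩

/-- Descent lemma: an element of `W (w - r)` lying in `M (w+j+1)` whose `N^(j+1+r)`-image
is deep enough in `M` actually lies in `M (w+j)`. -/
lemma lemD {a : ℤ} {W M : ℤ → Submodule E V} {N : V →ₗ[E] V}
    (haW : ∀ v : ℤ, v ≤ a → W v = ⊥)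
    (hMmono : Monotone M)
    (hMN : ∀ w : ℤ, (M w).map N ≤ M (w - 2))
    (hNW : ∀ w : ℤ, (W w).map N ≤ W w)
    (hinj : InjAx N W M)
    (w : ℤ) (j : ℕ) :
    ∀ (r : ℕ) (e : V), e ∈ W (w - (r : ℤ)) → e ∈ M (w + j + 1) →
      (N ^ (j + 1 + r)) e ∈ M (w - j - 2 - 2 * r) → e ∈ M (w + j) := by
  suffices h : ∀ (d r : ℕ), w - (r : ℤ) ≤ a + d → ∀ e : V, e ∈ W (w - (r : ℤ)) →
      e ∈ M (w + j + 1) →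
      (N ^ (j + 1 + r)) e ∈ M (w - j - 2 - 2 * r) → e ∈ M (w + j) by
    intro r e h1 h2 h3
    exact h (w - a).toNat r (by omega) e h1 h2 h3
  intro d
  induction d with
  | zero =>
    intro r hr e he _ _
    rw [haW _ (by omega)] at he
    simp only [Submodule.mem_bot] at he
    subst he
    exact zero_mem _
  | succ d ih =>
    intro r hr e heW heM heN
    by_cases hra : w - (r : ℤ) ≤ a
    · rw [haW _ hra] at heW
      simp only [Submodule.mem_bot] at heW
      subst heW
      exact zero_mem _
    · have step := hinj (w - (r : ℤ)) (j + 1 + r)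
      rw [show (w - (r : ℤ)) - ((j + 1 + r : ℕ) : ℤ) - 1 = w - j - 2 - 2 * r from by
            push_cast; ring,
          show (w - (r : ℤ)) + ((j + 1 + r : ℕ) : ℤ) - 1 = w + j from by push_cast; ring,
          show (w - (r : ℤ)) + ((j + 1 + r : ℕ) : ℤ) = w + j + 1 from by push_cast; ring] at step
      have hmem : e ∈ (M (w + j) ⊓ W (w - (r : ℤ))) ⊔ W (w - (r : ℤ) - 1) :=
        step e ⟨heM, heW⟩ (Submodule.mem_sup_left ⟨heN, aux_pow_W hNW _ heW⟩)
      rw [Submodule.mem_sup] at hmem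
      obtain ⟨z, hz, e', he', hsum⟩ := hmem
      have hz1 : z ∈ M (w + j) := hz.1
      have he'eq : e' = e - z := eq_sub_of_add_eq' hsum
      -- apply the inductive hypothesis to e' at r + 1
      have ih' := ih (r + 1)
      rw [show w - ((r + 1 : ℕ) : ℤ) = w - (r : ℤ) - 1 from by push_cast; ring] at ih'
      have he'M : e' ∈ M (w + j + 1) := by
        rw [he'eq]; exact sub_mem heM (hMmono (by omega) hz1)
      have he'N : (N ^ (j + 1 + (r + 1))) e' ∈ M (w - j - 2 - 2 * ((r + 1 : ℕ) : ℤ)) := by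
        have hp : (N ^ (j + 1 + (r + 1))) e' = N ((N ^ (j + 1 + r)) e') := by
          rw [show j + 1 + (r + 1) = (j + 1 + r) + 1 from rfl, pow_succ', Module.End.mul_apply]
        have ht : (N ^ (j + 1 + r)) e' ∈ M (w - j - 2 - 2 * r) := by
          rw [he'eq, map_sub]
          refine sub_mem heN ?_
          have := aux_pow_M hMN (j + 1 + r) hz1
          rw [show w + (j : ℤ) - 2 * ((j + 1 + r : ℕ) : ℤ) = w - j - 2 - 2 * r from by
                push_cast; ring] at this
          exact this
        have := hMN _ ⟨_, ht, rfl⟩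
        rw [hp, show w - (j : ℤ) - 2 - 2 * ((r + 1 : ℕ) : ℤ) = w - j - 2 - 2 * r - 2 from by
              push_cast; ring]
        exact this
      have he'Mj : e' ∈ M (w + j) := ih' (by omega) e' he' he'M he'N
      rw [← hsum]
      exact add_mem hz1 he'Mj


/-- Step for the "high" part `M (w+j) ⊓ W w ≤ M' (w+j) ⊓ W w`. -/
lemma stepQ {a : ℤ} {W M M' : ℤ → Submodule E V} {N : V →ₗ[E] V}
    (haW : ∀ v : ℤ, v ≤ a → W v = ⊥)
    (hNW : ∀ w : ℤ, (W w).map N ≤ W w)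
    (hMmono : Monotone M) (hM'mono : Monotone M')
    (hMN : ∀ w : ℤ, (M w).map N ≤ M (w - 2))
    (hM'N : ∀ w : ℤ, (M' w).map N ≤ M' (w - 2))
    (hMinj : InjAx N W M) (hM'inj : InjAx N W M')
    (w : ℤ) (j : ℕ)
    (hC : ∀ k : ℤ, M k ⊓ W (w - 1) = M' k ⊓ W (w - 1))
    (hQ1 : M (w + j + 1) ⊓ W w = M' (w + j + 1) ⊓ W w)
    (hP1 : M (w - j - 2) ⊓ W w = M' (w - j - 2) ⊓ W w)
    (hP3 : M (w - j - 4) ⊓ W w = M' (w - j - 4) ⊓ W w) :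
    M (w + j) ⊓ W w ≤ M' (w + j) ⊓ W w := by
  rintro x ⟨hxM, hxW⟩
  refine ⟨?_, hxW⟩
  -- x lies in M' (w+j+1)
  have hx1 : x ∈ M' (w + j + 1) := by
    have : x ∈ M (w + j + 1) ⊓ W w := ⟨hMmono (by omega) hxM, hxW⟩
    rw [hQ1] at this
    exact this.1
  -- N^(j+1) x lies in M' (w-j-2) ⊓ W w
  have hNx : (N ^ (j + 1)) x ∈ M' (w - j - 2) ⊓ W w := by
    have h1 := aux_pow_M hMN (j + 1) hxM
    rw [show w + (j : ℤ) - 2 * ((j + 1 : ℕ) : ℤ) = w - j - 2 from by push_cast; ring] at h1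
    rw [← hP1]
    exact ⟨h1, aux_pow_W hNW _ hxW⟩
  -- apply injectivity for M' at (w, j+1)
  have step := hM'inj w (j + 1)
  rw [show w - ((j + 1 : ℕ) : ℤ) - 1 = w - j - 2 from by push_cast; ring,
      show w + ((j + 1 : ℕ) : ℤ) - 1 = w + j from by push_cast; ring,
      show w + ((j + 1 : ℕ) : ℤ) = w + j + 1 from by push_cast; ring] at step
  have hx2 := step x ⟨hx1, hxW⟩ (Submodule.mem_sup_left hNx)
  rw [Submodule.mem_sup] at hx2
  obtain ⟨y, hy, z, hzW, hsum⟩ := hx2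
  have hzeq : z = x - y := eq_sub_of_add_eq' hsum
  -- z ∈ M (w+j+1)
  have hzM' : z ∈ M' (w + j + 1) := by
    rw [hzeq]; exact sub_mem hx1 (hM'mono (by omega) hy.1)
  have hzM : z ∈ M (w + j + 1) := by
    have : z ∈ M' (w + j + 1) ⊓ W (w - 1) := ⟨hzM', hzW⟩
    rw [← hC] at this
    exact this.1
  -- N^(j+2) z ∈ M (w-j-4)
  have hNz : (N ^ (j + 2)) z ∈ M (w - j - 4) := by
    have hx4 := aux_pow_M hMN (j + 2) hxM
    rw [show w + (j : ℤ) - 2 * ((j + 2 : ℕ) : ℤ) = w - j - 4 from by push_cast; ring] at hx4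
    have hy4 : (N ^ (j + 2)) y ∈ M (w - j - 4) := by
      have h1 := aux_pow_M hM'N (j + 2) hy.1
      rw [show w + (j : ℤ) - 2 * ((j + 2 : ℕ) : ℤ) = w - j - 4 from by push_cast; ring] at h1
      have : (N ^ (j + 2)) y ∈ M' (w - j - 4) ⊓ W w := ⟨h1, aux_pow_W hNW _ hy.2⟩
      rw [← hP3] at this
      exact this.1
    rw [hzeq, map_sub]
    exact sub_mem hx4 hy4
  -- descend: z ∈ M (w+j)
  have hzMj : z ∈ M (w + j) := by
    refine lemD haW hMmono hMN hNW hMinj w j 1 z ?_ hzM ?_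
    · rw [show w - ((1 : ℕ) : ℤ) = w - 1 from by push_cast; ring]
      exact hzW
    · rw [show w - (j : ℤ) - 2 - 2 * ((1 : ℕ) : ℤ) = w - j - 4 from by push_cast; ring]
      exact hNz
  have hzM'j : z ∈ M' (w + j) := by
    have : z ∈ M (w + j) ⊓ W (w - 1) := ⟨hzMj, hzW⟩
    rw [hC] at this
    exact this.1
  rw [← hsum]
  exact add_mem hy.1 hzM'j

/-- Step for the "low" part `M (w-j-1) ⊓ W w ≤ M' (w-j-1) ⊓ W w`. -/
lemma stepP {W M M' : ℤ → Submodule E V} {N : V →ₗ[E] V}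
    (hNW : ∀ w : ℤ, (W w).map N ≤ W w)
    (hMmono : Monotone M) (hM'mono : Monotone M')
    (hMN : ∀ w : ℤ, (M w).map N ≤ M (w - 2))
    (hM'N : ∀ w : ℤ, (M' w).map N ≤ M' (w - 2))
    (hMsurj : SurjAx N W M)
    (w : ℤ) (j : ℕ)
    (hC : ∀ k : ℤ, M k ⊓ W (w - 1) = M' k ⊓ W (w - 1))
    (hQ1 : M (w + j + 1) ⊓ W w = M' (w + j + 1) ⊓ W w)
    (hP1 : M (w - j - 2) ⊓ W w = M' (w - j - 2) ⊓ W w) :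
    M (w - j - 1) ⊓ W w ≤ M' (w - j - 1) ⊓ W w := by
  rintro x ⟨hxM, hxW⟩
  refine ⟨?_, hxW⟩
  have hsurj := hMsurj w (j + 1)
  rw [show w - ((j + 1 : ℕ) : ℤ) - 1 = w - j - 2 from by push_cast; ring,
      show w - ((j + 1 : ℕ) : ℤ) = w - j - 1 from by push_cast; ring,
      show w + ((j + 1 : ℕ) : ℤ) = w + j + 1 from by push_cast; ring] at hsurj
  obtain ⟨u, hu, hdiff⟩ := hsurj x ⟨hxM, hxW⟩
  rw [Submodule.mem_sup] at hdiff
  obtain ⟨v, hv, z, hzW, hsum⟩ := hdiff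
  have hNu : (N ^ (j + 1)) u ∈ M (w - j - 1) := by
    have h1 := aux_pow_M hMN (j + 1) hu.1
    rw [show w + (j : ℤ) + 1 - 2 * ((j + 1 : ℕ) : ℤ) = w - j - 1 from by push_cast; ring] at h1
    exact h1
  have hz : z ∈ M (w - j - 1) := by
    have hzeq : z = (x - (N ^ (j + 1)) u) - v := eq_sub_of_add_eq' hsum
    rw [hzeq]
    exact sub_mem (sub_mem hxM hNu) (hMmono (by omega) hv.1)
  have hzM' : z ∈ M' (w - j - 1) := by
    have : z ∈ M (w - j - 1) ⊓ W (w - 1) := ⟨hz, hzW⟩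
    rw [hC] at this
    exact this.1
  have huM' : u ∈ M' (w + j + 1) := by
    have : u ∈ M (w + j + 1) ⊓ W w := hu
    rw [hQ1] at this
    exact this.1
  have hNuM' : (N ^ (j + 1)) u ∈ M' (w - j - 1) := by
    have h1 := aux_pow_M hM'N (j + 1) huM'
    rw [show w + (j : ℤ) + 1 - 2 * ((j + 1 : ℕ) : ℤ) = w - j - 1 from by push_cast; ring] at h1
    exact h1
  have hvM' : v ∈ M' (w - j - 1) := by
    have : v ∈ M (w - j - 2) ⊓ W w := hv
    rw [hP1] at this
    exact hM'mono (by omega) this.1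
  have hxeq : x = (N ^ (j + 1)) u + (v + z) := by
    rw [hsum]; ring_nf
    abel
  rw [hxeq]
  exact add_mem hNuM' (add_mem hvM' hzM')


/-- If the two relative monodromy filtrations agree within `W (w-1)`, they agree
within `W w`. -/
lemma stepC {a : ℤ} {W M M' : ℤ → Submodule E V} {N : V →ₗ[E] V}
    (haW : ∀ v : ℤ, v ≤ a → W v = ⊥)
    (hNW : ∀ w : ℤ, (W w).map N ≤ W w)
    (hMmono : Monotone M) (hM'mono : Monotone M')
    (hMN : ∀ w : ℤ, (M w).map N ≤ M (w - 2))
    (hM'N : ∀ w : ℤ, (M' w).map N ≤ M' (w - 2))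
    (hMinj : InjAx N W M) (hM'inj : InjAx N W M')
    (hMsurj : SurjAx N W M) (hM'surj : SurjAx N W M')
    {aM bM aM' bM' : ℤ}
    (haM : ∀ k ≤ aM, M k = ⊥) (hbM : ∀ k : ℤ, bM ≤ k → M k = ⊤)
    (haM' : ∀ k ≤ aM', M' k = ⊥) (hbM' : ∀ k : ℤ, bM' ≤ k → M' k = ⊤)
    (w : ℤ)
    (hC : ∀ k : ℤ, M k ⊓ W (w - 1) = M' k ⊓ W (w - 1)) :
    ∀ k : ℤ, M k ⊓ W w = M' k ⊓ W w := by
  have hC' : ∀ k : ℤ, M' k ⊓ W (w - 1) = M k ⊓ W (w - 1) := fun k => (hC k).symm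
  obtain ⟨n, hn1, hn2, hn3, hn4⟩ : ∃ n : ℕ, bM ≤ w + n ∧ bM' ≤ w + n ∧
      w - n - 1 ≤ aM ∧ w - n - 1 ≤ aM' :=
    ⟨((bM - w).toNat + (bM' - w).toNat + (w - aM).toNat + (w - aM').toNat), by omega,
      by omega, by omega, by omega⟩
  have key : ∀ d : ℕ, ∀ j : ℕ, n ≤ j + d →
      (M (w + j) ⊓ W w = M' (w + j) ⊓ W w ∧
       M (w - j - 1) ⊓ W w = M' (w - j - 1) ⊓ W w) := by
    intro d
    induction d with
    | zero =>
      intro j hj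
      constructor
      · rw [hbM _ (by omega), hbM' _ (by omega)]
      · rw [haM _ (by omega), haM' _ (by omega)]
    | succ d ih =>
      intro j hj
      by_cases hjn : n ≤ j
      · constructor
        · rw [hbM _ (by omega), hbM' _ (by omega)]
        · rw [haM _ (by omega), haM' _ (by omega)]
      · have ih1 := ih (j + 1) (by omega)
        have ih3 := ih (j + 3) (by omega)
        have hQ1 : M (w + j + 1) ⊓ W w = M' (w + j + 1) ⊓ W w := by
          have := ih1.1
          rw [show w + ((j + 1 : ℕ) : ℤ) = w + j + 1 from by push_cast; ring] at this
          exact this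
        have hP1 : M (w - j - 2) ⊓ W w = M' (w - j - 2) ⊓ W w := by
          have := ih1.2
          rw [show w - ((j + 1 : ℕ) : ℤ) - 1 = w - j - 2 from by push_cast; ring] at this
          exact this
        have hP3 : M (w - j - 4) ⊓ W w = M' (w - j - 4) ⊓ W w := by
          have := ih3.2
          rw [show w - ((j + 3 : ℕ) : ℤ) - 1 = w - j - 4 from by push_cast; ring] at this
          exact this
        constructor
        · exact le_antisymm
            (stepQ haW hNW hMmono hM'mono hMN hM'N hMinj hM'inj w j hC hQ1 hP1 hP3)
            (stepQ haW hNW hM'mono hMmono hM'N hMN hM'inj hMinj w j hC'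
              hQ1.symm hP1.symm hP3.symm)
        · exact le_antisymm
            (stepP hNW hMmono hM'mono hMN hM'N hMsurj w j hC hQ1 hP1)
            (stepP hNW hM'mono hMmono hM'N hMN hM'surj w j hC' hQ1.symm hP1.symm)
  intro k
  rcases le_or_gt w k with hk | hk
  · have h1 := (key n (k - w).toNat (by omega)).1
    rw [show w + (((k - w).toNat : ℕ) : ℤ) = k from by omega] at h1
    exact h1
  · have h1 := (key n (w - 1 - k).toNat (by omega)).2
    rw [show w - (((w - 1 - k).toNat : ℕ) : ℤ) - 1 = k from by omega] at h1
    exact h1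

end RelMonAux

/-- Deligne's uniqueness of the relative monodromy filtration. -/
theorem relative_monodromy_filtration_unique
    {E V : Type*} [Field E] [CharZero E] [AddCommGroup V] [Module E V]
    [FiniteDimensional E V]
    (W W' W'' : ℤ → Submodule E V) (N : V →ₗ[E] V)
    (hW : IsFiniteIncFiltration W) (hN : IsNilpotent N) (hNW : ∀ w : ℤ, (W w).map N ≤ W w)
    (h' : IsRelMonodromy N W W') (h'' : IsRelMonodromy N W W'') :
    W' = W'' := by

  obtain ⟨hWmono, ⟨a, ha⟩, ⟨b, hb⟩⟩ := hW
  obtain ⟨⟨hM1mono, ⟨a1, ha1⟩, ⟨b1, hb1⟩⟩, hM1N, hgr1⟩ := h'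
  obtain ⟨⟨hM2mono, ⟨a2, ha2⟩, ⟨b2, hb2⟩⟩, hM2N, hgr2⟩ := h''
  have hinj1 : RelMonAux.InjAx N W W' := fun w m => (hgr1 w m).1
  have hsurj1 : RelMonAux.SurjAx N W W' := fun w m => (hgr1 w m).2
  have hinj2 : RelMonAux.InjAx N W W'' := fun w m => (hgr2 w m).1
  have hsurj2 : RelMonAux.SurjAx N W W'' := fun w m => (hgr2 w m).2
  have main : ∀ w : ℤ, a ≤ w → ∀ k : ℤ, W' k ⊓ W w = W'' k ⊓ W w := by
    intro w
    refine Int.le_induction (motive := fun w _ => ∀ k : ℤ, W' k ⊓ W w = W'' k ⊓ W w) ?_ ?_ w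
    · intro k; rw [ha a le_rfl]; simp
    · intro w _ ih
      refine RelMonAux.stepC ha hNW hM1mono hM2mono hM1N hM2N hinj1 hinj2 hsurj1 hsurj2
        ha1 hb1 ha2 hb2 (w + 1) ?_
      intro k
      rw [show w + 1 - 1 = w from by ring]
      exact ih k
  funext k
  have htop : W (max b a) = ⊤ := hb _ (le_max_left _ _)
  have h1 := main (max b a) (le_max_right _ _) k
  rw [htop] at h1
  simpa using h1
end

section
/- Let V be a finite-dimensional real vector space, α a 𝔾_m-action on V (a ℤ-grading V = ⊕_w V_w), and for w ∈ ℤ let V_w be the weight-w part. Define a decreasing filtration F on V_ℂ^{⊕2} as the direct sum over w of: for w = 2r even, F^r = (V_w)_ℂ^{⊕2}, F^{r+1} = 0; for w = 2r+1 odd, F^r = (V_w)_ℂ^{⊕2}, F^{r+2} = 0, and F^{r+1} the ℂ-span of {(i ⊗ x, 1 ⊗ x) : x ∈ V_w}. Let W' be the filtration on V with W'_w = ⊕_{k ≤ w} V_k. Then (V^{⊕2}, W'^{⊕2}, F) is a mixed ℝ-Hodge structure, i.e., F induces a pure Hodge structure of weight w on each gr^{W'^{⊕2}}_w ≅ V_w^{⊕2}.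 -/
open Submodule
open scoped TensorProduct

/-- Complex conjugation on the complexification `ℂ ⊗[ℝ] V` of a real vector space. -/
noncomputable def conjTensor (V : Type*) [AddCommGroup V] [Module ℝ V] :
    (ℂ ⊗[ℝ] V) →ₛₗ[starRingEnd ℂ] (ℂ ⊗[ℝ] V) where
  toFun := TensorProduct.map (Complex.conjAe.toLinearMap) LinearMap.id
  map_add' x y := map_add _ x y
  map_smul' c x := by
    try simp only [RingHom.id_apply]
    induction x using TensorProduct.induction_on with
    | zero => simp
    | tmul a v => simp [TensorProduct.smul_tmul', smul_eq_mul]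
    | add x y hx hy =>
        simp only [smul_add, map_add] at *
        rw [hx, hy]

/-- Complex conjugation on the complexification `(ℂ ⊗[ℝ] V)²` of `V ⊕ V`. -/
noncomputable def conjTensor₂ (V : Type*) [AddCommGroup V] [Module ℝ V] :
    ((ℂ ⊗[ℝ] V) × (ℂ ⊗[ℝ] V)) →ₛₗ[starRingEnd ℂ] ((ℂ ⊗[ℝ] V) × (ℂ ⊗[ℝ] V)) where
  toFun v := (conjTensor V v.1, conjTensor V v.2)
  map_add' v w := by simp [Prod.ext_iff]
  map_smul' c v := by simp [Prod.ext_iff, map_smulₛₗ]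

section Aux

variable {V : Type*} [AddCommGroup V] [Module ℝ V]

@[simp] lemma conjTensor_tmul (c : ℂ) (x : V) :
    conjTensor V (c ⊗ₜ[ℝ] x) = (starRingEnd ℂ c) ⊗ₜ[ℝ] x := by
  simp [conjTensor]

lemma conjTensor_conjTensor (x : ℂ ⊗[ℝ] V) : conjTensor V (conjTensor V x) = x := by
  induction x using TensorProduct.induction_on with
  | zero => simp
  | tmul a v => simp
  | add x y hx hy => rw [map_add, map_add, hx, hy]

lemma conjTensor₂_apply (x : (ℂ ⊗[ℝ] V) × (ℂ ⊗[ℝ] V)) :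
    conjTensor₂ V x = (conjTensor V x.1, conjTensor V x.2) := rfl

lemma conjTensor₂_conjTensor₂ (x : (ℂ ⊗[ℝ] V) × (ℂ ⊗[ℝ] V)) :
    conjTensor₂ V (conjTensor₂ V x) = x := by
  simp [conjTensor₂_apply, conjTensor_conjTensor]

lemma map_conjTensor_baseChange (p : Submodule ℝ V) :
    (p.baseChange ℂ).map (conjTensor V) = p.baseChange ℂ := by
  have h : ∀ q : Submodule ℝ V, (q.baseChange ℂ).map (conjTensor V) ≤ q.baseChange ℂ := by
    intro q
    rw [Submodule.map_le_iff_le_comap, Submodule.baseChange_eq_span, Submodule.span_le]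
    rintro - ⟨m, hm, rfl⟩
    simp only [SetLike.mem_coe, Submodule.mem_comap, TensorProduct.mk_apply]
    simpa [Submodule.baseChange_eq_span] using Submodule.tmul_mem_baseChange_of_mem (1 : ℂ) hm
  refine le_antisymm (h p) ?_
  intro x hx
  have hx' : conjTensor V x ∈ p.baseChange ℂ := h p ⟨x, hx, rfl⟩
  exact ⟨conjTensor V x, hx', conjTensor_conjTensor x⟩

lemma map_conjTensor₂_prod (p q : Submodule ℂ (ℂ ⊗[ℝ] V)) :
    (p.prod q).map (conjTensor₂ V) = (p.map (conjTensor V)).prod (q.map (conjTensor V)) := by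
  apply le_antisymm
  · rintro - ⟨⟨a, b⟩, ⟨ha, hb⟩, rfl⟩
    exact ⟨⟨a, ha, rfl⟩, ⟨b, hb, rfl⟩⟩
  · rintro ⟨a', b'⟩ ⟨⟨a, ha, rfl⟩, ⟨b, hb, rfl⟩⟩
    exact ⟨(a, b), ⟨ha, hb⟩, rfl⟩

/-- prod of biSups is biSup of prods -/
lemma prod_biSup (p : ℤ → Submodule ℂ (ℂ ⊗[ℝ] V)) (P : ℤ → Prop) :
    (⨆ k, ⨆ _ : P k, p k).prod (⨆ k, ⨆ _ : P k, p k) =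
      ⨆ k, ⨆ _ : P k, (p k).prod (p k) := by
  apply le_antisymm
  · rintro ⟨a, b⟩ ⟨ha, hb⟩
    have key : ∀ (f : (ℂ ⊗[ℝ] V) →ₗ[ℂ] (ℂ ⊗[ℝ] V) × (ℂ ⊗[ℝ] V)),
        (∀ k, (p k).map f ≤ (p k).prod (p k)) → ∀ c ∈ (⨆ k, ⨆ _ : P k, p k),
        f c ∈ ⨆ k, ⨆ _ : P k, (p k).prod (p k) := by
      intro f hf c hc
      have : f c ∈ (⨆ k, ⨆ _ : P k, p k).map f := ⟨c, hc, rfl⟩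
      rw [Submodule.map_iSup] at this
      have hle : (⨆ k, ((⨆ _ : P k, p k).map f)) ≤ ⨆ k, ⨆ _ : P k, (p k).prod (p k) := by
        refine iSup_le fun k => ?_
        rw [Submodule.map_iSup]
        exact iSup_le fun hk =>
          (hf k).trans (le_iSup₂ (f := fun k (_ : P k) => (p k).prod (p k)) k hk)
      exact hle this
    have h1 := key (LinearMap.inl ℂ _ _) (fun k => by
      rintro - ⟨c, hc, rfl⟩; exact ⟨hc, Submodule.zero_mem _⟩) a ha
    have h2 := key (LinearMap.inr ℂ _ _) (fun k => by
      rintro - ⟨c, hc, rfl⟩; exact ⟨Submodule.zero_mem _, hc⟩) b hb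
    have : (a, b) = (a, 0) + (0, b) := by simp
    rw [this]
    exact Submodule.add_mem _ h1 h2
  · exact iSup₂_le fun k hk => Submodule.prod_mono
      (le_iSup₂ (f := fun k (_ : P k) => p k) k hk)
      (le_iSup₂ (f := fun k (_ : P k) => p k) k hk)

end Aux


section Proj
open Classical in
/-- projection onto the pieces indexed by `P`, from an internal grading -/
lemma exists_proj {V : Type*} [AddCommGroup V] [Module ℝ V]
    (Vg : ℤ → Submodule ℝ V) (hgr : DirectSum.IsInternal Vg) (P : ℤ → Prop) :
    ∃ π : V →ₗ[ℝ] V, (∀ k, P k → ∀ x ∈ Vg k, π x = x) ∧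
      (∀ k, ¬ P k → ∀ x ∈ Vg k, π x = 0) := by
  classical
  set e := LinearEquiv.ofBijective (DirectSum.coeLinearMap Vg) hgr with he
  set φ : ∀ k : ℤ, (Vg k →ₗ[ℝ] V) := fun k => if P k then (Vg k).subtype else 0 with hφ
  refine ⟨(DirectSum.toModule ℝ ℤ V φ) ∘ₗ (e.symm : V →ₗ[ℝ] _), ?_, ?_⟩
  · intro k hk x hx
    have h1 : e.symm x = DirectSum.lof ℝ ℤ (fun k => Vg k) k ⟨x, hx⟩ := by
      rw [LinearEquiv.symm_apply_eq, he]
      simp [DirectSum.lof_eq_of, DirectSum.coeLinearMap_of]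
      exact (DirectSum.coeLinearMap_of Vg k ⟨x, hx⟩).symm
    simp [h1, DirectSum.toModule_lof, hφ, hk]
  · intro k hk x hx
    have h1 : e.symm x = DirectSum.lof ℝ ℤ (fun k => Vg k) k ⟨x, hx⟩ := by
      rw [LinearEquiv.symm_apply_eq, he]
      simp [DirectSum.lof_eq_of, DirectSum.coeLinearMap_of]
      exact (DirectSum.coeLinearMap_of Vg k ⟨x, hx⟩).symm
    simp [h1, DirectSum.toModule_lof, hφ, hk]

/-- complexified projections -/
lemma exists_projC {V : Type*} [AddCommGroup V] [Module ℝ V]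
    (Vg : ℤ → Submodule ℝ V) (hgr : DirectSum.IsInternal Vg) (P : ℤ → Prop) :
    ∃ π : (ℂ ⊗[ℝ] V) →ₗ[ℂ] (ℂ ⊗[ℝ] V),
      (∀ k, P k → ∀ x ∈ (Vg k).baseChange ℂ, π x = x) ∧
      (∀ k, ¬ P k → ∀ x ∈ (Vg k).baseChange ℂ, π x = 0) := by
  obtain ⟨π, h1, h2⟩ := exists_proj Vg hgr P
  refine ⟨π.baseChange ℂ, ?_, ?_⟩
  · intro k hk x hx
    have : (Vg k).baseChange ℂ ≤ LinearMap.ker (π.baseChange ℂ - LinearMap.id) := by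
      rw [Submodule.baseChange_eq_span, Submodule.span_le]
      rintro - ⟨m, hm, rfl⟩
      simp [LinearMap.sub_apply, LinearMap.baseChange_tmul, h1 k hk m hm]
    have := this hx
    rw [LinearMap.mem_ker, LinearMap.sub_apply] at this
    simpa [sub_eq_zero] using this
  · intro k hk x hx
    have : (Vg k).baseChange ℂ ≤ LinearMap.ker (π.baseChange ℂ) := by
      rw [Submodule.baseChange_eq_span, Submodule.span_le]
      rintro - ⟨m, hm, rfl⟩
      simp [LinearMap.baseChange_tmul, h2 k hk m hm]
    exact this hx

/-- disjointness of sups of the D-pieces over disjoint index predicates -/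
lemma disj_biSup {V : Type*} [AddCommGroup V] [Module ℝ V]
    (Vg : ℤ → Submodule ℝ V) (hgr : DirectSum.IsInternal Vg) (P Q : ℤ → Prop)
    (hPQ : ∀ k, P k → Q k → False)
    (X : ℤ → Submodule ℂ ((ℂ ⊗[ℝ] V) × (ℂ ⊗[ℝ] V)))
    (hX : ∀ k, X k ≤ ((Vg k).baseChange ℂ).prod ((Vg k).baseChange ℂ)) :
    (⨆ k, ⨆ _ : P k, X k) ⊓ (⨆ k, ⨆ _ : Q k, X k) ≤ ⊥ := by
  obtain ⟨π, h1, h2⟩ := exists_projC Vg hgr P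
  set π₂ : ((ℂ ⊗[ℝ] V) × (ℂ ⊗[ℝ] V)) →ₗ[ℂ] ((ℂ ⊗[ℝ] V) × (ℂ ⊗[ℝ] V)) := π.prodMap π
  have hfix : (⨆ k, ⨆ _ : P k, X k) ≤ LinearMap.ker (π₂ - LinearMap.id) := by
    refine iSup₂_le fun k hk => (hX k).trans ?_
    rintro ⟨a, b⟩ ⟨ha, hb⟩
    simp only [LinearMap.mem_ker, LinearMap.sub_apply, LinearMap.id_apply, Prod.ext_iff,
      LinearMap.prodMap_apply, π₂, Prod.fst_sub, Prod.snd_sub]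
    constructor
    · rw [h1 k hk a ha]; simp
    · rw [h1 k hk b hb]; simp
  have hkill : (⨆ k, ⨆ _ : Q k, X k) ≤ LinearMap.ker π₂ := by
    refine iSup₂_le fun k hk => (hX k).trans ?_
    rintro ⟨a, b⟩ ⟨ha, hb⟩
    have hnk : ¬ P k := fun h => hPQ k h hk
    simp only [LinearMap.mem_ker, LinearMap.prodMap_apply, Prod.ext_iff, π₂]
    exact ⟨h2 k hnk a ha, h2 k hnk b hb⟩
  rintro x ⟨hx1, hx2⟩
  have e1 := hfix hx1
  have e2 := hkill hx2
  rw [LinearMap.mem_ker, LinearMap.sub_apply, LinearMap.id_apply, sub_eq_zero] at e1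
  rw [LinearMap.mem_ker] at e2
  simp only [Submodule.mem_bot]
  rw [← e1, e2]
end Proj


section SpanS

variable {V : Type*} [AddCommGroup V] [Module ℝ V] (Vg : ℤ → Submodule ℝ V) (w : ℤ)

/-- the generating set of the middle piece -/
def sSet : Set ((ℂ ⊗[ℝ] V) × (ℂ ⊗[ℝ] V)) :=
  {v | ∃ x ∈ Vg w, v = (Complex.I • ((1 : ℂ) ⊗ₜ[ℝ] x), (1 : ℂ) ⊗ₜ[ℝ] x)}

lemma spanS_le_D :
    span ℂ (sSet Vg w) ≤ ((Vg w).baseChange ℂ).prod ((Vg w).baseChange ℂ) := by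
  rw [Submodule.span_le]
  rintro - ⟨x, hx, rfl⟩
  exact ⟨Submodule.smul_mem _ _ (Submodule.tmul_mem_baseChange_of_mem 1 hx),
    Submodule.tmul_mem_baseChange_of_mem 1 hx⟩

lemma mem_spanS (u : ℂ ⊗[ℝ] V) (hu : u ∈ (Vg w).baseChange ℂ) :
    (Complex.I • u, u) ∈ span ℂ (sSet Vg w) := by
  rw [Submodule.baseChange_eq_span] at hu
  induction hu using Submodule.span_induction with
  | mem z hz =>
      obtain ⟨m, hm, rfl⟩ := hz
      exact Submodule.subset_span ⟨m, hm, rfl⟩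
  | zero => simp only [smul_zero]; exact Submodule.zero_mem (span ℂ (sSet Vg w))
  | add y z _ _ hy hz =>
      have : (Complex.I • (y + z), y + z) = (Complex.I • y, y) + (Complex.I • z, z) := by
        simp [smul_add, Prod.ext_iff]
      rw [this]; exact Submodule.add_mem _ hy hz
  | smul c y _ hy =>
      have : (Complex.I • (c • y), c • y) = c • (Complex.I • y, y) := by
        rw [Prod.smul_mk, smul_comm]
      rw [this]; exact Submodule.smul_mem _ _ hy

lemma mem_conj_spanS (v : ℂ ⊗[ℝ] V) (hv : v ∈ (Vg w).baseChange ℂ) :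
    ((-Complex.I) • v, v) ∈ (span ℂ (sSet Vg w)).map (conjTensor₂ V) := by
  set u := conjTensor V v with hu
  have hu' : u ∈ (Vg w).baseChange ℂ := (map_conjTensor_baseChange (Vg w)) ▸ ⟨v, hv, rfl⟩
  refine ⟨(Complex.I • u, u), mem_spanS Vg w u hu', ?_⟩
  rw [conjTensor₂_apply]
  have h2 : conjTensor V u = v := conjTensor_conjTensor v
  have h1 : conjTensor V (Complex.I • u) = (-Complex.I) • v := by
    rw [map_smulₛₗ, h2]
    simp
  simp [h1, h2]

lemma D_le_spanS_sup_conj (x : (ℂ ⊗[ℝ] V) × (ℂ ⊗[ℝ] V))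
    (hx : x ∈ ((Vg w).baseChange ℂ).prod ((Vg w).baseChange ℂ)) :
    x ∈ span ℂ (sSet Vg w) ⊔ (span ℂ (sSet Vg w)).map (conjTensor₂ V) := by
  obtain ⟨a, b⟩ := x
  obtain ⟨ha, hb⟩ := hx
  set u : ℂ ⊗[ℝ] V := (2 : ℂ)⁻¹ • (b + (-Complex.I) • a) with hu
  set v : ℂ ⊗[ℝ] V := (2 : ℂ)⁻¹ • (b + Complex.I • a) with hv
  have hu' : u ∈ (Vg w).baseChange ℂ :=
    Submodule.smul_mem _ _ (Submodule.add_mem _ hb (Submodule.smul_mem _ _ ha))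
  have hv' : v ∈ (Vg w).baseChange ℂ :=
    Submodule.smul_mem _ _ (Submodule.add_mem _ hb (Submodule.smul_mem _ _ ha))
  have key : (a, b) = (Complex.I • u, u) + ((-Complex.I) • v, v) := by
    rw [Prod.ext_iff]
    constructor
    · show a = Complex.I • u + (-Complex.I) • v
      rw [hu, hv]
      match_scalars <;> ring_nf
      all_goals norm_num [Complex.I_sq]
    · show b = u + v
      rw [hu, hv]
      match_scalars <;> ring_nf
      all_goals norm_num [Complex.I_sq]
  rw [key]
  exact Submodule.add_mem _ (Submodule.mem_sup_left (mem_spanS Vg w u hu'))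
    (Submodule.mem_sup_right (mem_conj_spanS Vg w v hv'))

lemma spanS_inf_conj :
    span ℂ (sSet Vg w) ⊓ (span ℂ (sSet Vg w)).map (conjTensor₂ V) ≤ ⊥ := by
  set f : ((ℂ ⊗[ℝ] V) × (ℂ ⊗[ℝ] V)) →ₗ[ℂ] (ℂ ⊗[ℝ] V) :=
    LinearMap.fst ℂ _ _ - Complex.I • LinearMap.snd ℂ _ _ with hf
  have hS : span ℂ (sSet Vg w) ≤ LinearMap.ker f := by
    rw [Submodule.span_le]
    rintro - ⟨x, hx, rfl⟩
    simp [hf, LinearMap.sub_apply]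
  rintro z ⟨hz1, hz2⟩
  have e1 : z.1 = Complex.I • z.2 := by
    have := hS hz1
    rw [LinearMap.mem_ker] at this
    simp only [hf, LinearMap.sub_apply, LinearMap.smul_apply, LinearMap.fst_apply,
      LinearMap.snd_apply, sub_eq_zero] at this
    exact this
  obtain ⟨y, hy, rfl⟩ := hz2
  have ey : y.1 = Complex.I • y.2 := by
    have := hS hy
    rw [LinearMap.mem_ker] at this
    simp only [hf, LinearMap.sub_apply, LinearMap.smul_apply, LinearMap.fst_apply,
      LinearMap.snd_apply, sub_eq_zero] at this
    exact this
  rw [conjTensor₂_apply] at e1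
  simp only at e1
  rw [ey, map_smulₛₗ, Complex.conj_I] at e1
  have h2 : (-Complex.I - Complex.I) • conjTensor V y.2 = 0 := by
    rw [sub_smul, e1, sub_self]
  have h3 : conjTensor V y.2 = 0 := by
    rcases smul_eq_zero.mp h2 with h | h
    · exfalso
      apply Complex.I_ne_zero
      have : (-2 : ℂ) * Complex.I = 0 := by rw [← h]; ring
      have h4 : (-2 : ℂ) ≠ 0 := by norm_num
      exact (mul_eq_zero.mp this).resolve_left h4
    · exact h
  have h5 : conjTensor V y.1 = 0 := by rw [ey, map_smulₛₗ, h3, smul_zero]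
  simp [Submodule.mem_bot, conjTensor₂_apply, Prod.ext_iff, h3, h5]

end SpanS


/-- The Hodge filtration on `(V_w)_ℂ^{⊕2} ⊆ (ℂ ⊗[ℝ] V)²` attached to the weight-`w`
part `V_w` of a grading:  for `w = 2r` even, `F^r = (V_w)_ℂ^{⊕2}` and `F^{r+1} = 0`;
for `w = 2r+1` odd, `F^r = (V_w)_ℂ^{⊕2}`, `F^{r+2} = 0`, and `F^{r+1}` is the ℂ-span
of the vectors `(i ⊗ x, 1 ⊗ x)`, `x ∈ V_w`. -/
noncomputable def hodgePiece {V : Type*} [AddCommGroup V] [Module ℝ V]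
    (Vg : ℤ → Submodule ℝ V) (w p : ℤ) : Submodule ℂ ((ℂ ⊗[ℝ] V) × (ℂ ⊗[ℝ] V)) :=
  if 2 * p ≤ w then ((Vg w).baseChange ℂ).prod ((Vg w).baseChange ℂ)
  else if w % 2 = 1 ∧ 2 * p = w + 1 then
    Submodule.span ℂ {v : (ℂ ⊗[ℝ] V) × (ℂ ⊗[ℝ] V) |
      ∃ x ∈ Vg w, v = (Complex.I • ((1 : ℂ) ⊗ₜ[ℝ] x), (1 : ℂ) ⊗ₜ[ℝ] x)}
  else ⊥

set_option maxHeartbeats 1000000 in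
/-- Given a real vector space `V` with a `𝔾_m`-action (a grading `V = ⊕_w V_w`), the
filtration `F = ⊕_w F(V_w^{⊕2})` of Section 2.3 of the paper together with the weight
filtration `W'_w = ⊕_{k ≤ w} V_k` makes `(V^{⊕2}, W'^{⊕2}, F)` a mixed ℝ-Hodge
structure:  for every `w` and `p`, `F` induces on `gr^{W'}_w ≅ V_w^{⊕2}` a pure Hodge
structure of weight `w`, i.e. `gr_w = F^p(gr_w) ⊕ conj(F^{w+1-p}(gr_w))`
(sup is everything and intersection vanishes, modulo `W'_{w-1}`). -/
theorem deligne_to_hodge_functor_is_MHS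
    {V : Type*} [AddCommGroup V] [Module ℝ V] [FiniteDimensional ℝ V]
    (Vg : ℤ → Submodule ℝ V) (hgr : DirectSum.IsInternal Vg) :
    ∀ w p : ℤ,
      -- the complexified weight filtration `W` of `W'^{⊕2}` on `(ℂ ⊗[ℝ] V)²`
      (((⨆ q : ℤ, hodgePiece Vg q p) ⊓
          ((⨆ k : ℤ, ⨆ _ : k ≤ w, (Vg k).baseChange ℂ).prod
            (⨆ k : ℤ, ⨆ _ : k ≤ w, (Vg k).baseChange ℂ))) ⊔
        ((⨆ k : ℤ, ⨆ _ : k ≤ w - 1, (Vg k).baseChange ℂ).prod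
            (⨆ k : ℤ, ⨆ _ : k ≤ w - 1, (Vg k).baseChange ℂ))) ⊔
      ((((⨆ q : ℤ, hodgePiece Vg q (w + 1 - p)) ⊓
          ((⨆ k : ℤ, ⨆ _ : k ≤ w, (Vg k).baseChange ℂ).prod
            (⨆ k : ℤ, ⨆ _ : k ≤ w, (Vg k).baseChange ℂ))) ⊔
        ((⨆ k : ℤ, ⨆ _ : k ≤ w - 1, (Vg k).baseChange ℂ).prod
            (⨆ k : ℤ, ⨆ _ : k ≤ w - 1, (Vg k).baseChange ℂ))).map (conjTensor₂ V)) =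
        ((⨆ k : ℤ, ⨆ _ : k ≤ w, (Vg k).baseChange ℂ).prod
            (⨆ k : ℤ, ⨆ _ : k ≤ w, (Vg k).baseChange ℂ)) ∧
      ((((⨆ q : ℤ, hodgePiece Vg q p) ⊓
          ((⨆ k : ℤ, ⨆ _ : k ≤ w, (Vg k).baseChange ℂ).prod
            (⨆ k : ℤ, ⨆ _ : k ≤ w, (Vg k).baseChange ℂ))) ⊔
        ((⨆ k : ℤ, ⨆ _ : k ≤ w - 1, (Vg k).baseChange ℂ).prod
            (⨆ k : ℤ, ⨆ _ : k ≤ w - 1, (Vg k).baseChange ℂ))) ⊓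
      ((((⨆ q : ℤ, hodgePiece Vg q (w + 1 - p)) ⊓
          ((⨆ k : ℤ, ⨆ _ : k ≤ w, (Vg k).baseChange ℂ).prod
            (⨆ k : ℤ, ⨆ _ : k ≤ w, (Vg k).baseChange ℂ))) ⊔
        ((⨆ k : ℤ, ⨆ _ : k ≤ w - 1, (Vg k).baseChange ℂ).prod
            (⨆ k : ℤ, ⨆ _ : k ≤ w - 1, (Vg k).baseChange ℂ))).map (conjTensor₂ V))) ≤
        ((⨆ k : ℤ, ⨆ _ : k ≤ w - 1, (Vg k).baseChange ℂ).prod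
            (⨆ k : ℤ, ⨆ _ : k ≤ w - 1, (Vg k).baseChange ℂ)) := by
  intro w p
  classical
  -- abbreviations
  have hDle : ∀ q p' : ℤ, hodgePiece Vg q p' ≤
      ((Vg q).baseChange ℂ).prod ((Vg q).baseChange ℂ) := by
    intro q p'
    unfold hodgePiece
    split_ifs with h1 h2
    · exact le_rfl
    · exact spanS_le_D Vg q
    · exact bot_le
  have hW : ∀ w' : ℤ,
      (⨆ k : ℤ, ⨆ _ : k ≤ w', (Vg k).baseChange ℂ).prod
        (⨆ k : ℤ, ⨆ _ : k ≤ w', (Vg k).baseChange ℂ) =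
      ⨆ k : ℤ, ⨆ _ : k ≤ w', ((Vg k).baseChange ℂ).prod ((Vg k).baseChange ℂ) :=
    fun w' => prod_biSup (fun k => (Vg k).baseChange ℂ) (fun k => k ≤ w')
  rw [hW w, hW (w - 1)]
  set D : ℤ → Submodule ℂ ((ℂ ⊗[ℝ] V) × (ℂ ⊗[ℝ] V)) :=
    fun k => ((Vg k).baseChange ℂ).prod ((Vg k).baseChange ℂ) with hDdef
  set A : Submodule ℂ ((ℂ ⊗[ℝ] V) × (ℂ ⊗[ℝ] V)) := ⨆ k : ℤ, ⨆ _ : k ≤ w, D k with hAdef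
  set Z : Submodule ℂ ((ℂ ⊗[ℝ] V) × (ℂ ⊗[ℝ] V)) := ⨆ k : ℤ, ⨆ _ : k ≤ w - 1, D k with hZdef
  have hDA : ∀ k : ℤ, k ≤ w → D k ≤ A := fun k hk =>
    le_iSup₂ (f := fun k (_ : k ≤ w) => D k) k hk
  have hDZ : ∀ k : ℤ, k ≤ w - 1 → D k ≤ Z := fun k hk =>
    le_iSup₂ (f := fun k (_ : k ≤ w - 1) => D k) k hk
  have hZA : Z ≤ A := iSup₂_le fun k hk => hDA k (by omega)
  have hconjD : ∀ k : ℤ, (D k).map (conjTensor₂ V) = D k := by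
    intro k
    rw [hDdef]
    simp only
    rw [map_conjTensor₂_prod, map_conjTensor_baseChange]
  have hconjA : A.map (conjTensor₂ V) = A := by
    rw [hAdef]
    simp only [Submodule.map_iSup, hconjD]
  have hconjZ : Z.map (conjTensor₂ V) = Z := by
    rw [hZdef]
    simp only [Submodule.map_iSup, hconjD]
  have hsplitW : A = Z ⊔ D w := by
    apply le_antisymm
    · refine iSup₂_le fun k hk => ?_
      rcases eq_or_ne k w with rfl | hne
      · exact le_sup_right
      · exact le_sup_of_le_left (hDZ k (by omega))
    · exact sup_le hZA (hDA w le_rfl)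
  have hdisj1 : (⨆ q : ℤ, ⨆ _ : w < q, D q) ⊓ A ≤ ⊥ :=
    disj_biSup Vg hgr (fun q => w < q) (fun k => k ≤ w) (fun k h1 h2 => by omega)
      D (fun k => le_rfl)
  have hdisj2 : D w ⊓ Z ≤ ⊥ := by
    have h := disj_biSup Vg hgr (fun q => q = w) (fun k => k ≤ w - 1)
      (fun k h1 h2 => by omega) D (fun k => le_rfl)
    exact le_trans (inf_le_inf_right _
      (le_iSup₂ (f := fun k (_ : k = w) => D k) w rfl)) h
  have hZDw : Z ⊓ D w ≤ ⊥ := le_trans (le_of_eq (inf_comm _ _)) hdisj2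
  -- splitting the Hodge filtration at w
  have hsplitF : ∀ p' : ℤ, (⨆ q : ℤ, hodgePiece Vg q p') =
      (⨆ q : ℤ, ⨆ _ : q ≤ w, hodgePiece Vg q p') ⊔
      (⨆ q : ℤ, ⨆ _ : w < q, hodgePiece Vg q p') := by
    intro p'
    apply le_antisymm
    · refine iSup_le fun q => ?_
      rcases le_or_gt q w with h | h
      · exact le_sup_of_le_left (le_iSup₂ (f := fun q (_ : q ≤ w) => hodgePiece Vg q p') q h)
      · exact le_sup_of_le_right (le_iSup₂ (f := fun q (_ : w < q) => hodgePiece Vg q p') q h)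
    · exact sup_le (iSup₂_le fun q _ => le_iSup (fun q => hodgePiece Vg q p') q)
        (iSup₂_le fun q _ => le_iSup (fun q => hodgePiece Vg q p') q)
  -- Step A
  have stepA : ∀ p' : ℤ, (⨆ q : ℤ, hodgePiece Vg q p') ⊓ A ≤ hodgePiece Vg w p' ⊔ Z := by
    intro p'
    rw [hsplitF p']
    have hY : (⨆ q : ℤ, ⨆ _ : q ≤ w, hodgePiece Vg q p') ≤ A :=
      iSup₂_le fun q hq => (hDle q p').trans (hDA q hq)
    rw [sup_inf_assoc_of_le _ hY]
    refine sup_le ?_ ?_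
    · refine iSup₂_le fun q hq => ?_
      rcases eq_or_ne q w with rfl | hne
      · exact le_sup_left
      · exact le_sup_of_le_right ((hDle q p').trans (hDZ q (by omega)))
    · have hZ' : (⨆ q : ℤ, ⨆ _ : w < q, hodgePiece Vg q p') ≤ ⨆ q : ℤ, ⨆ _ : w < q, D q :=
        iSup₂_le fun q hq => (hDle q p').trans
          (le_iSup₂ (f := fun q (_ : w < q) => D q) q hq)
      exact le_trans (le_trans (inf_le_inf_right _ hZ') hdisj1) bot_le
  -- values of hodgePiece at weight w
  have hPval1 : ∀ q p' : ℤ, 2 * p' ≤ q → hodgePiece Vg q p' = D q := by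
    intro q p' h
    unfold hodgePiece
    rw [if_pos h]
  have hPval2 : ∀ p' : ℤ, ¬ (2 * p' ≤ w) → ¬ (w % 2 = 1 ∧ 2 * p' = w + 1) →
      hodgePiece Vg w p' = ⊥ := by
    intro p' h1 h2
    unfold hodgePiece
    rw [if_neg h1, if_neg h2]
  have hPval3 : ∀ p' : ℤ, w % 2 = 1 → 2 * p' = w + 1 →
      hodgePiece Vg w p' = span ℂ (sSet Vg w) := by
    intro p' h1 h2
    unfold hodgePiece
    rw [if_neg (by omega), if_pos ⟨h1, h2⟩]
    rfl
  constructor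
  · -- sup is everything
    apply le_antisymm
    · refine sup_le (sup_le inf_le_right hZA) ?_
      calc (((⨆ q : ℤ, hodgePiece Vg q (w + 1 - p)) ⊓ A) ⊔ Z).map (conjTensor₂ V)
          ≤ A.map (conjTensor₂ V) := Submodule.map_mono (sup_le inf_le_right hZA)
        _ = A := hconjA
    · conv_lhs => rw [hsplitW]
      refine sup_le (le_sup_of_le_left le_sup_right) ?_
      by_cases h1 : 2 * p ≤ w
      · refine le_sup_of_le_left (le_sup_of_le_left (le_inf ?_ (hDA w le_rfl)))
        exact (le_of_eq (hPval1 w p h1).symm).trans (le_iSup (fun q => hodgePiece Vg q p) w)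
      · by_cases h2 : 2 * (w + 1 - p) ≤ w
        · refine le_sup_of_le_right ?_
          have hin : D w ≤ (⨆ q : ℤ, hodgePiece Vg q (w + 1 - p)) ⊓ A :=
            le_inf ((le_of_eq (hPval1 w _ h2).symm).trans
              (le_iSup (fun q => hodgePiece Vg q (w + 1 - p)) w)) (hDA w le_rfl)
          calc D w = (D w).map (conjTensor₂ V) := (hconjD w).symm
            _ ≤ _ := Submodule.map_mono (hin.trans le_sup_left)
        · have hw : w % 2 = 1 := by omega
          have hp : 2 * p = w + 1 := by omega
          have hp' : w + 1 - p = p := by omega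
          have e : hodgePiece Vg w p = span ℂ (sSet Vg w) := hPval3 p hw hp
          have e' : hodgePiece Vg w (w + 1 - p) = span ℂ (sSet Vg w) := by
            rw [hp']; exact e
          have hSA : span ℂ (sSet Vg w) ≤ A := (spanS_le_D Vg w).trans (hDA w le_rfl)
          have base : D w ≤ span ℂ (sSet Vg w) ⊔
              (span ℂ (sSet Vg w)).map (conjTensor₂ V) :=
            fun x hx => D_le_spanS_sup_conj Vg w x hx
          refine base.trans (sup_le ?_ ?_)
          · exact le_sup_of_le_left (le_sup_of_le_left (le_inf
              ((le_of_eq e.symm).trans (le_iSup (fun q => hodgePiece Vg q p) w)) hSA))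
          · refine le_sup_of_le_right (Submodule.map_mono ?_)
            exact le_sup_of_le_left (le_inf
              ((le_of_eq e'.symm).trans
                (le_iSup (fun q => hodgePiece Vg q (w + 1 - p)) w)) hSA)
  · -- intersection is small
    have hA1 : ((⨆ q : ℤ, hodgePiece Vg q p) ⊓ A) ⊔ Z ≤ hodgePiece Vg w p ⊔ Z :=
      sup_le (stepA p) le_sup_right
    have hA2 : (((⨆ q : ℤ, hodgePiece Vg q (w + 1 - p)) ⊓ A) ⊔ Z).map (conjTensor₂ V) ≤
        (hodgePiece Vg w (w + 1 - p)).map (conjTensor₂ V) ⊔ Z := by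
      calc (((⨆ q : ℤ, hodgePiece Vg q (w + 1 - p)) ⊓ A) ⊔ Z).map (conjTensor₂ V)
          ≤ (hodgePiece Vg w (w + 1 - p) ⊔ Z).map (conjTensor₂ V) :=
            Submodule.map_mono (sup_le (stepA (w + 1 - p)) le_sup_right)
        _ = (hodgePiece Vg w (w + 1 - p)).map (conjTensor₂ V) ⊔ Z := by
            rw [Submodule.map_sup, hconjZ]
    refine (inf_le_inf hA1 hA2).trans ?_
    set X : Submodule ℂ ((ℂ ⊗[ℝ] V) × (ℂ ⊗[ℝ] V)) := hodgePiece Vg w p with hXdef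
    set Y : Submodule ℂ ((ℂ ⊗[ℝ] V) × (ℂ ⊗[ℝ] V)) :=
      (hodgePiece Vg w (w + 1 - p)).map (conjTensor₂ V) with hYdef
    have hXD : X ≤ D w := hDle w p
    have hYD : Y ≤ D w := by
      rw [hYdef]
      exact (Submodule.map_mono (hDle w (w + 1 - p))).trans (le_of_eq (hconjD w))
    have hXY : X ⊓ Y ≤ ⊥ := by
      by_cases h1 : 2 * p ≤ w
      · have hY0 : hodgePiece Vg w (w + 1 - p) = ⊥ :=
          hPval2 _ (by omega) (by rintro ⟨-, h⟩; omega)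
        have : Y = ⊥ := by rw [hYdef, hY0, Submodule.map_bot]
        exact le_trans inf_le_right (le_of_eq this)
      · by_cases h2 : 2 * (w + 1 - p) ≤ w
        · have hX0 : X = ⊥ := hPval2 p h1 (by rintro ⟨-, h⟩; omega)
          exact le_trans inf_le_left (le_of_eq hX0)
        · by_cases hw : w % 2 = 1
          · have hp : 2 * p = w + 1 := by omega
            have hp' : w + 1 - p = p := by omega
            have eX : X = span ℂ (sSet Vg w) := hPval3 p hw hp
            have eY : Y = (span ℂ (sSet Vg w)).map (conjTensor₂ V) := by
              rw [hYdef, hp', hPval3 p hw hp]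
            rw [eX, eY]
            exact spanS_inf_conj Vg w
          · have hX0 : X = ⊥ := hPval2 p h1 (by rintro ⟨h, -⟩; exact hw h)
            exact le_trans inf_le_left (le_of_eq hX0)
    have hXYZ : X ⊓ (Y ⊔ Z) ≤ ⊥ := by
      have step1 : X ⊓ (Y ⊔ Z) ≤ Y := by
        calc X ⊓ (Y ⊔ Z) ≤ D w ⊓ (Y ⊔ Z) := inf_le_inf_right _ hXD
          _ = (Y ⊔ Z) ⊓ D w := inf_comm _ _
          _ = Y ⊔ (Z ⊓ D w) := sup_inf_assoc_of_le _ hYD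
          _ ≤ Y ⊔ ⊥ := sup_le_sup_left hZDw _
          _ = Y := sup_bot_eq _
      exact le_trans (le_inf inf_le_left step1) hXY
    calc (X ⊔ Z) ⊓ (Y ⊔ Z) = (Z ⊔ X) ⊓ (Y ⊔ Z) := by rw [sup_comm X Z]
      _ = Z ⊔ (X ⊓ (Y ⊔ Z)) := sup_inf_assoc_of_le _ le_sup_right
      _ ≤ Z ⊔ ⊥ := sup_le_sup_left hXYZ _
      _ = Z := sup_bot_eq _
end
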